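/- The coded family S = {H_a | a ∈ I} is an effective Borel σ-algebra on ℕ: there exist computable functions u₁, u₂, u₃ : ℕ → ℕ such that (a) for all i: u₁(i) ∈ I and H_{u₁(i)} = {i}; (b) for all a ∈ I: u₂(a) ∈ I and H_{u₂(a)} = ℕ \ H_a; and (c) for all e such that φ_e(i) is defined and φ_e(i) ∈ I for every i: u₃(e) ∈ I and H_{u₃(e)} = ⋃_{i ∈ ℕ} H_{φ_e(i)}. -/

import Mathlib

noncomputable section

/-- The `e`-th partial recursive function `ℕ ⇀ ℕ`. -/
def phi (e : ℕ) : ℕ →. ℕ := (Denumerable.ofNat Nat.Partrec.Code e).eval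

/-- The monotone operator `Ψ₀`. -/
def Psi0 : Set ℕ →o Set ℕ where
  toFun J := {a | (∃ e, a = Nat.pair 0 e) ∨
    ∃ e, a = Nat.pair 1 e ∧ ∀ k, ∃ v ∈ phi e k, v ∈ J}
  monotone' := by
    intro J J' hJ a ha
    rcases ha with ⟨e, he⟩ | ⟨e, he, hk⟩
    · exact Or.inl ⟨e, he⟩
    · refine Or.inr ⟨e, he, fun k => ?_⟩
      obtain ⟨v, hv, hvJ⟩ := hk k
      exact ⟨v, hv, hJ hvJ⟩

/-- `I`, the least fixed point of `Ψ₀`. -/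
def Iset : Set ℕ := OrderHom.lfp Psi0

/-- The transfinite stages `I_ξ`. -/
def Istage : Ordinal → Set ℕ :=
  WellFounded.fix Ordinal.lt_wf fun ξ ih =>
    if ξ = 0 then {a | ∃ e, a = Nat.pair 0 e}
    else {a | ∃ e, a = Nat.pair 1 e ∧
      ∀ k, ∃ v ∈ phi e k, ∃ η, ∃ hη : η < ξ, v ∈ ih η hη}

/-- The norm `‖a‖` of `a ∈ I`: the least ordinal `ξ` with `a ∈ I_ξ`. -/
def Inorm (a : ℕ) : Ordinal := sInf {ξ | a ∈ Istage ξ}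

/-- The monotone operator `Ψ₁`. -/
def Psi1 : Set (ℕ × ℕ) →o Set (ℕ × ℕ) where
  toFun A := {p | (∃ e, p.1 = Nat.pair 0 e ∧ p.2 = e) ∨
    ∃ e, p.1 = Nat.pair 1 e ∧ ∃ t, ∀ s, ∃ v ∈ phi e (Nat.pair t s), (v, p.2) ∈ A}
  monotone' := by
    intro A A' hA p hp
    rcases hp with ⟨e, he, hx⟩ | ⟨e, he, t, ht⟩
    · exact Or.inl ⟨e, he, hx⟩
    · refine Or.inr ⟨e, he, t, fun s => ?_⟩
      obtain ⟨v, hv, hvA⟩ := ht s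
      exact ⟨v, hv, hA hvA⟩

/-- `Hp`, the least fixed point of `Ψ₁`. -/
def Hp : Set (ℕ × ℕ) := OrderHom.lfp Psi1

/-- `H_a`, the `a`-section of `Hp`. -/
def Hset (a : ℕ) : Set ℕ := {x | (a, x) ∈ Hp}

/-- The monotone operator `Φ_ψ` associated with the positive formula `ψ`. -/
def PhiPsi : Set ℕ →o Set ℕ where
  toFun R := {y | ∃ a x e, y = Nat.pair a x ∧
    ((a = Nat.pair 0 e ∧ x = e) ∨
     (a = Nat.pair 1 e ∧ ∃ t, ∀ s, ∃ v ∈ phi e (Nat.pair t s), Nat.pair v x ∈ R))}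
  monotone' := by
    intro R R' hR y hy
    obtain ⟨a, x, e, hy, hcase⟩ := hy
    refine ⟨a, x, e, hy, ?_⟩
    rcases hcase with h | ⟨he, t, ht⟩
    · exact Or.inl h
    · refine Or.inr ⟨he, t, fun s => ?_⟩
      obtain ⟨v, hv, hvR⟩ := ht s
      exact ⟨v, hv, hR hvR⟩


open Nat.Partrec (Code)
open Nat.Partrec.Code Encodable Denumerable

lemma mem_Iset_iff {a : ℕ} : a ∈ Iset ↔ (∃ e, a = Nat.pair 0 e) ∨
    ∃ e, a = Nat.pair 1 e ∧ ∀ k, ∃ v ∈ phi e k, v ∈ Iset := by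
  conv_lhs => rw [Iset, ← OrderHom.map_lfp Psi0]
  exact Iff.rfl

lemma mem_Hp_iff {p : ℕ × ℕ} : p ∈ Hp ↔ (∃ e, p.1 = Nat.pair 0 e ∧ p.2 = e) ∨
    ∃ e, p.1 = Nat.pair 1 e ∧ ∃ t, ∀ s, ∃ v ∈ phi e (Nat.pair t s), (v, p.2) ∈ Hp := by
  conv_lhs => rw [Hp, ← OrderHom.map_lfp Psi1]
  exact Iff.rfl

lemma pair0_mem_Iset (e : ℕ) : Nat.pair 0 e ∈ Iset :=
  mem_Iset_iff.2 (Or.inl ⟨e, rfl⟩)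

lemma pair1_mem_Iset {e : ℕ} (h : ∀ k, ∃ v ∈ phi e k, v ∈ Iset) :
    Nat.pair 1 e ∈ Iset :=
  mem_Iset_iff.2 (Or.inr ⟨e, rfl, h⟩)

lemma Hset_pair0 (e : ℕ) : Hset (Nat.pair 0 e) = {e} := by
  ext x
  simp only [Hset, Set.mem_setOf_eq, Set.mem_singleton_iff]
  rw [mem_Hp_iff]
  constructor
  · rintro (⟨e', he', hx⟩ | ⟨e', he', _⟩)
    · rw [Nat.pair_eq_pair] at he'; exact hx.trans he'.2.symm
    · rw [Nat.pair_eq_pair] at he'; exact absurd he'.1 (by norm_num)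
  · rintro rfl; exact Or.inl ⟨_, rfl, rfl⟩

lemma Hset_pair1 (e : ℕ) : Hset (Nat.pair 1 e) =
    {x | ∃ t, ∀ s, ∃ v ∈ phi e (Nat.pair t s), x ∈ Hset v} := by
  ext x
  simp only [Hset, Set.mem_setOf_eq]
  rw [mem_Hp_iff]
  constructor
  · rintro (⟨e', he', _⟩ | ⟨e', he', t, ht⟩)
    · rw [Nat.pair_eq_pair] at he'; exact absurd he'.1 (by norm_num)
    · rw [Nat.pair_eq_pair] at he'; exact ⟨t, by rw [he'.2]; exact ht⟩
  · rintro ⟨t, ht⟩; exact Or.inr ⟨e, rfl, t, ht⟩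

lemma Iset_induction {P : ℕ → Prop} (h0 : ∀ e, P (Nat.pair 0 e))
    (h1 : ∀ e, (∀ k, ∃ v ∈ phi e k, v ∈ Iset ∧ P v) → P (Nat.pair 1 e)) :
    ∀ a ∈ Iset, P a := by
  have hsub : Iset ⊆ {a | a ∈ Iset ∧ P a} := by
    apply OrderHom.lfp_le Psi0
    rintro a (⟨e, rfl⟩ | ⟨e, rfl, hk⟩)
    · exact ⟨pair0_mem_Iset e, h0 e⟩
    · refine ⟨pair1_mem_Iset fun k => ?_, h1 e fun k => ?_⟩
      · obtain ⟨v, hv, hvS⟩ := hk k; exact ⟨v, hv, hvS.1⟩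
      · obtain ⟨v, hv, hvS⟩ := hk k; exact ⟨v, hv, hvS⟩
  exact fun a ha => (hsub ha).2

lemma phi_encode (c : Code) : phi (encode c) = c.eval := by
  simp [phi]

/-- The coded family `S = {H_a | a ∈ I}` is an effective Borel σ-algebra on `ℕ`. -/
theorem effective_sigma_algebra :
    ∃ u₁ u₂ u₃ : ℕ → ℕ, Computable u₁ ∧ Computable u₂ ∧ Computable u₃ ∧
      (∀ i : ℕ, u₁ i ∈ Iset ∧ Hset (u₁ i) = {i}) ∧
      (∀ a ∈ Iset, u₂ a ∈ Iset ∧ Hset (u₂ a) = (Hset a)ᶜ) ∧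
      (∀ e : ℕ, (∀ i, ∃ v ∈ phi e i, v ∈ Iset) →
        u₃ e ∈ Iset ∧ Hset (u₃ e) = {x | ∃ i, ∃ v ∈ phi e i, x ∈ Hset v}) := by
  classical
  -- the code d₃ used for countable unions
  obtain ⟨d₃, hd₃⟩ : ∃ c : Code, c.eval = fun n => phi n.unpair.1 n.unpair.2.unpair.1 :=
    exists_code.1 (Partrec.nat_iff.1 ((eval_part.comp
      ((Computable.ofNat Code).comp (Computable.fst.comp Computable.unpair))
      (Computable.fst.comp (Computable.unpair.comp
        (Computable.snd.comp Computable.unpair)))).of_eq fun n => rfl))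
  -- the code dA used for complements of singletons
  obtain ⟨dA, hdA⟩ : ∃ c : Code, c.eval = fun n => Part.some (Nat.pair 0
      (if n.unpair.2.unpair.1 < n.unpair.1 then n.unpair.2.unpair.1
        else n.unpair.2.unpair.1 + 1)) := by
    have hs1 : Primrec fun n : ℕ => n.unpair.2.unpair.1 :=
      Primrec.fst.comp (Primrec.unpair.comp (Primrec.snd.comp Primrec.unpair))
    have he1 : Primrec fun n : ℕ => n.unpair.1 := Primrec.fst.comp Primrec.unpair
    have hg : Primrec fun n : ℕ => Nat.pair 0
        (if n.unpair.2.unpair.1 < n.unpair.1 then n.unpair.2.unpair.1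
          else n.unpair.2.unpair.1 + 1) :=
      Primrec₂.natPair.comp (Primrec.const 0)
        (Primrec.ite (Primrec.nat_lt.comp hs1 he1) hs1 (Primrec.succ.comp hs1))
    exact exists_code.1 (Partrec.nat_iff.1 hg.to_comp.partrec)
  -- the code dB used for the inner unions in complements
  obtain ⟨dB, hdB⟩ : ∃ c : Code, c.eval = fun n =>
      (phi n.unpair.1.unpair.2.unpair.1
        (Nat.pair n.unpair.1.unpair.2.unpair.2 n.unpair.2.unpair.1)).bind
        fun v => phi n.unpair.1.unpair.1 v := by
    have h1 : Partrec fun n : ℕ => phi n.unpair.1.unpair.2.unpair.1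
        (Nat.pair n.unpair.1.unpair.2.unpair.2 n.unpair.2.unpair.1) :=
      (eval_part.comp
        ((Computable.ofNat Code).comp (Primrec.fst.comp (Primrec.unpair.comp
          (Primrec.snd.comp (Primrec.unpair.comp
            (Primrec.fst.comp Primrec.unpair))))).to_comp)
        ((Primrec₂.natPair.comp
          (Primrec.snd.comp (Primrec.unpair.comp (Primrec.snd.comp
            (Primrec.unpair.comp (Primrec.fst.comp Primrec.unpair)))))
          (Primrec.fst.comp (Primrec.unpair.comp
            (Primrec.snd.comp Primrec.unpair)))).to_comp)).of_eq fun n => rfl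
    have h2 : Partrec₂ fun (n v : ℕ) => phi n.unpair.1.unpair.1 v :=
      (eval_part.comp
        ((Computable.ofNat Code).comp (Primrec.fst.comp (Primrec.unpair.comp
          (Primrec.fst.comp (Primrec.unpair.comp Primrec.fst)))).to_comp)
        Computable.snd).of_eq fun n => rfl
    exact exists_code.1 (Partrec.nat_iff.1 (h1.bind h2))
  -- the code dC used for the outer intersections in complements
  obtain ⟨dC, hdC⟩ : ∃ c : Code, c.eval = fun n => Part.some (Nat.pair 1
      (encode (curry dB (Nat.pair n.unpair.1.unpair.1
        (Nat.pair n.unpair.1.unpair.2 n.unpair.2.unpair.2))))) := by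
    have hg : Primrec fun n : ℕ => Nat.pair 1
        (encode (curry dB (Nat.pair n.unpair.1.unpair.1
          (Nat.pair n.unpair.1.unpair.2 n.unpair.2.unpair.2)))) :=
      Primrec₂.natPair.comp (Primrec.const 1)
        (Primrec.encode.comp (primrec₂_curry.comp (Primrec.const dB)
          (Primrec₂.natPair.comp
            (Primrec.fst.comp (Primrec.unpair.comp (Primrec.fst.comp Primrec.unpair)))
            (Primrec₂.natPair.comp
              (Primrec.snd.comp (Primrec.unpair.comp (Primrec.fst.comp Primrec.unpair)))
              (Primrec.snd.comp (Primrec.unpair.comp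
                (Primrec.snd.comp Primrec.unpair)))))))
    exact exists_code.1 (Partrec.nat_iff.1 hg.to_comp.partrec)
  -- the recursion for u₂
  set F : ℕ → ℕ → ℕ := fun c a =>
    if a.unpair.1 = 0 then Nat.pair 1 (encode (curry dA a.unpair.2))
    else Nat.pair 1 (encode (curry dC (Nat.pair c a.unpair.2))) with hFdef
  have hF : Primrec₂ F := by
    have h1 : Primrec fun p : ℕ × ℕ => p.2.unpair.1 :=
      Primrec.fst.comp (Primrec.unpair.comp Primrec.snd)
    have h2 : Primrec fun p : ℕ × ℕ => p.2.unpair.2 :=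
      Primrec.snd.comp (Primrec.unpair.comp Primrec.snd)
    exact Primrec.ite (Primrec.eq.comp h1 (Primrec.const 0))
      (Primrec₂.natPair.comp (Primrec.const 1)
        (Primrec.encode.comp (primrec₂_curry.comp (Primrec.const dA) h2)))
      (Primrec₂.natPair.comp (Primrec.const 1)
        (Primrec.encode.comp (primrec₂_curry.comp (Primrec.const dC)
          (Primrec₂.natPair.comp Primrec.fst h2))))
  obtain ⟨c₀, hc₀⟩ := fixed_point₂ (f := fun (c : Code) (n : ℕ) => (F (encode c) n : Part ℕ))
    (Computable₂.partrec₂ (Primrec₂.to_comp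
      (hF.comp (Primrec.encode.comp Primrec.fst) Primrec.snd)))
  have hrec : ∀ n, phi (encode c₀) n = Part.some (F (encode c₀) n) := by
    intro n
    rw [phi_encode, hc₀]
    rfl
  refine ⟨fun i => Nat.pair 0 i, F (encode c₀),
    fun e => Nat.pair 1 (encode (curry d₃ e)), ?_, ?_, ?_, ?_, ?_, ?_⟩
  · exact (Primrec₂.natPair.comp (Primrec.const 0) Primrec.id).to_comp
  · exact (hF.comp (Primrec.const (encode c₀)) Primrec.id).to_comp
  · exact (Primrec₂.natPair.comp (Primrec.const 1)
      (Primrec.encode.comp (primrec₂_curry.comp (Primrec.const d₃) Primrec.id))).to_comp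
  · -- u₁ : singletons
    exact fun i => ⟨pair0_mem_Iset i, Hset_pair0 i⟩
  · -- u₂ : complements
    apply Iset_induction
    · -- complement of a singleton
      intro e
      have hFe : F (encode c₀) (Nat.pair 0 e) = Nat.pair 1 (encode (curry dA e)) := by
        simp [hFdef, Nat.unpair_pair]
      have hphi : ∀ k, phi (encode (curry dA e)) k = Part.some (Nat.pair 0
          (if k.unpair.1 < e then k.unpair.1 else k.unpair.1 + 1)) := by
        intro k
        rw [phi_encode, eval_curry, hdA]
        simp [Nat.unpair_pair]
      rw [hFe]
      constructor
      · exact pair1_mem_Iset fun k =>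
          ⟨_, by rw [hphi k]; exact Part.mem_some _, pair0_mem_Iset _⟩
      · rw [Hset_pair1, Hset_pair0]
        ext x
        simp only [Set.mem_setOf_eq, Set.mem_compl_iff, Set.mem_singleton_iff]
        constructor
        · rintro ⟨t, ht⟩
          obtain ⟨v, hv, hxv⟩ := ht 0
          rw [hphi] at hv
          simp only [Part.mem_some_iff] at hv
          subst hv
          rw [Hset_pair0] at hxv
          simp only [Set.mem_singleton_iff] at hxv
          subst hxv
          simp only [Nat.unpair_pair]
          split <;> omega
        · intro hx
          refine ⟨if x < e then x else x - 1, fun s => ?_⟩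
          refine ⟨_, by rw [hphi]; exact Part.mem_some _, ?_⟩
          rw [Hset_pair0]
          simp only [Set.mem_singleton_iff, Nat.unpair_pair]
          rcases lt_or_gt_of_ne hx with h | h
          · simp [h]
          · have : ¬ (if x < e then x else x - 1) < e := by
              split <;> omega
            simp only [this, if_neg, if_false]
            split <;> omega
    · -- complement of a union of intersections
      intro e IH
      choose V hV using IH
      have hVphi : ∀ k, phi e k = Part.some (V k) := fun k => Part.eq_some_iff.2 (hV k).1
      have hVI : ∀ k, V k ∈ Iset := fun k => (hV k).2.1
      have hVu : ∀ k, F (encode c₀) (V k) ∈ Iset ∧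
          Hset (F (encode c₀) (V k)) = (Hset (V k))ᶜ := fun k => (hV k).2.2
      set B : ℕ → ℕ := fun t =>
        Nat.pair 1 (encode (curry dB (Nat.pair (encode c₀) (Nat.pair e t)))) with hBdef
      have hphiB : ∀ t m, phi (encode (curry dB (Nat.pair (encode c₀) (Nat.pair e t)))) m =
          Part.some (F (encode c₀) (V (Nat.pair t m.unpair.1))) := by
        intro t m
        rw [phi_encode, eval_curry, hdB]
        simp only [Nat.unpair_pair]
        rw [hVphi, Part.bind_some, hrec]
      have hBI : ∀ t, B t ∈ Iset := fun t =>
        pair1_mem_Iset fun m =>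
          ⟨_, by rw [hphiB t m]; exact Part.mem_some _, (hVu _).1⟩
      have hBset : ∀ t, Hset (B t) = {x | ∃ s, x ∉ Hset (V (Nat.pair t s))} := by
        intro t
        rw [hBdef]
        simp only
        rw [Hset_pair1]
        ext x
        simp only [Set.mem_setOf_eq]
        constructor
        · rintro ⟨s, hs⟩
          obtain ⟨v, hv, hxv⟩ := hs 0
          rw [hphiB] at hv
          simp only [Part.mem_some_iff] at hv
          subst hv
          rw [(hVu _).2] at hxv
          exact ⟨(Nat.pair s 0).unpair.1, hxv⟩
        · rintro ⟨s, hs⟩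
          refine ⟨s, fun s' => ⟨_, by rw [hphiB]; exact Part.mem_some _, ?_⟩⟩
          rw [(hVu _).2]
          simpa [Nat.unpair_pair] using hs
      have hFe : F (encode c₀) (Nat.pair 1 e) =
          Nat.pair 1 (encode (curry dC (Nat.pair (encode c₀) e))) := by
        simp [hFdef, Nat.unpair_pair]
      have hphiC : ∀ m, phi (encode (curry dC (Nat.pair (encode c₀) e))) m =
          Part.some (B m.unpair.2) := by
        intro m
        rw [phi_encode, eval_curry, hdC]
        simp [Nat.unpair_pair, hBdef]
      rw [hFe]
      constructor
      · exact pair1_mem_Iset fun m =>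
          ⟨_, by rw [hphiC m]; exact Part.mem_some _, hBI _⟩
      · rw [Hset_pair1, Hset_pair1]
        ext x
        simp only [Set.mem_setOf_eq, Set.mem_compl_iff]
        constructor
        · rintro ⟨t, ht⟩ ⟨t', ht'⟩
          obtain ⟨v, hv, hxv⟩ := ht t'
          rw [hphiC] at hv
          simp only [Part.mem_some_iff] at hv
          subst hv
          simp only [Nat.unpair_pair] at hxv
          rw [hBset] at hxv
          obtain ⟨s, hs⟩ := hxv
          obtain ⟨v', hv', hxv'⟩ := ht' s
          rw [hVphi] at hv'
          simp only [Part.mem_some_iff] at hv'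
          subst hv'
          exact hs hxv'
        · intro hx
          refine ⟨0, fun s => ⟨_, by rw [hphiC]; exact Part.mem_some _, ?_⟩⟩
          rw [hBset]
          simp only [Nat.unpair_pair, Set.mem_setOf_eq]
          by_contra hcon
          push_neg at hcon
          refine hx ⟨s, fun s' => ?_⟩
          refine ⟨_, by rw [hVphi]; exact Part.mem_some _, ?_⟩
          exact hcon s'
  · -- u₃ : countable unions
    intro e h
    choose V hV using h
    have hVphi : ∀ i, phi e i = Part.some (V i) := fun i => Part.eq_some_iff.2 (hV i).1
    have hphi3 : ∀ k, phi (encode (curry d₃ e)) k = Part.some (V k.unpair.1) := by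
      intro k
      rw [phi_encode, eval_curry, hd₃]
      simp only [Nat.unpair_pair]
      exact hVphi _
    constructor
    · exact pair1_mem_Iset fun k =>
        ⟨_, by rw [hphi3 k]; exact Part.mem_some _, (hV _).2⟩
    · rw [Hset_pair1]
      ext x
      simp only [Set.mem_setOf_eq]
      constructor
      · rintro ⟨t, ht⟩
        obtain ⟨v, hv, hxv⟩ := ht 0
        rw [hphi3] at hv
        simp only [Part.mem_some_iff] at hv
        subst hv
        simp only [Nat.unpair_pair] at hxv
        exact ⟨t, _, (hVphi t) ▸ Part.mem_some _, hxv⟩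
      · rintro ⟨i, v, hv, hxv⟩
        rw [hVphi] at hv
        simp only [Part.mem_some_iff] at hv
        subst hv
        refine ⟨i, fun s => ⟨_, by rw [hphi3]; exact Part.mem_some _, ?_⟩⟩
        simpa [Nat.unpair_pair] using hxv
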